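/- For n = 2^{m-2} + 1 with m ≥ 2 and uniform input distribution Π = (1/n)·I, there is no subset 𝒰 ⊆ ℝ^{n×m} of utility matrices such that for all channels C, C̄ ∈ ℝ^{m×n}: (C̄ is a Shannon-garbling of C) if and only if (for all U ∈ 𝒰, max over D ∈ Φ(C) of tr(U·D·Π) ≥ max over D ∈ Φ(C̄) of tr(U·D·Π)). -/

import Mathlib

open Matrix BigOperators

def ColStoch {m n : ℕ} (A : Matrix (Fin m) (Fin n) ℝ) : Prop :=
  (∀ i j, 0 ≤ A i j) ∧ ∀ j, ∑ i, A i j = 1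

/-- Auxiliary: column-stochastic matrices are closed under products. -/
lemma colStoch_mul {a b c : ℕ} {A : Matrix (Fin a) (Fin b) ℝ} {B : Matrix (Fin b) (Fin c) ℝ}
    (hA : ColStoch A) (hB : ColStoch B) : ColStoch (A * B) := by
  constructor
  · intro i j
    rw [Matrix.mul_apply]
    exact Finset.sum_nonneg fun k _ => mul_nonneg (hA.1 i k) (hB.1 k j)
  · intro j
    simp only [Matrix.mul_apply]
    rw [Finset.sum_comm]
    calc ∑ k, ∑ i, A i k * B k j = ∑ k : Fin b, B k j := by
          refine Finset.sum_congr rfl fun k _ => ?_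
          rw [← Finset.sum_mul, hA.2 k, one_mul]
      _ = 1 := hB.2 j

lemma colStoch_one {k : ℕ} : ColStoch (1 : Matrix (Fin k) (Fin k) ℝ) := by
  constructor
  · intro i j; by_cases h : i = j <;> simp [Matrix.one_apply, h]
  · intro j; simp [Matrix.one_apply]

lemma colStoch_avg {a b : ℕ} {B1 B2 : Matrix (Fin a) (Fin b) ℝ}
    (h1 : ColStoch B1) (h2 : ColStoch B2) : ColStoch ((2:ℝ)⁻¹ • (B1 + B2)) := by
  constructor
  · intro i j
    have := h1.1 i j; have := h2.1 i j
    simp only [Matrix.smul_apply, Matrix.add_apply, smul_eq_mul]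
    nlinarith
  · intro j
    simp only [Matrix.smul_apply, Matrix.add_apply, smul_eq_mul, ← Finset.mul_sum,
      Finset.sum_add_distrib, h1.2 j, h2.2 j]
    norm_num

/-- A "selection" matrix: column `j` is the standard basis vector `e (f j)`. -/
def Sel {a b : ℕ} (f : Fin b → Fin a) : Matrix (Fin a) (Fin b) ℝ :=
  fun i j => if i = f j then 1 else 0

lemma colStoch_sel {a b : ℕ} (f : Fin b → Fin a) : ColStoch (Sel f) := by
  constructor
  · intro i j; unfold Sel; split <;> norm_num
  · intro j; simp [Sel, Finset.sum_ite_eq]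

lemma sel_mul_sel {a b c : ℕ} (f : Fin b → Fin a) (g : Fin c → Fin b) :
    (Sel f * Sel g : Matrix (Fin a) (Fin c) ℝ) = Sel (f ∘ g) := by
  ext i j
  simp [Sel, Matrix.mul_apply, Finset.sum_ite_eq, ite_and]

lemma mul_sel_apply {a b c : ℕ} (W : Matrix (Fin a) (Fin b) ℝ) (f : Fin c → Fin b)
    (i : Fin a) (j : Fin c) : (W * Sel f) i j = W i (f j) := by
  simp [Sel, Matrix.mul_apply, Finset.sum_ite_eq]

/- The witness triple for `3 ≤ m`, `3 ≤ n`: a channel `A` with two distinct columns,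
two garblings of it whose average is not a garbling (its columns are affinely
independent, while all garblings of `A` have their columns on a segment). -/

set_option maxHeartbeats 2000000 in
lemma caseA (m n : ℕ) (hm : 3 ≤ m) (hn : 3 ≤ n) :
    ∃ A B1 B2 : Matrix (Fin m) (Fin n) ℝ, ColStoch A ∧ ColStoch B1 ∧ ColStoch B2 ∧
      (∃ (M : Matrix (Fin m) (Fin m) ℝ) (N : Matrix (Fin n) (Fin n) ℝ), ColStoch M ∧ ColStoch N ∧ B1 = M * A * N) ∧
      (∃ (M : Matrix (Fin m) (Fin m) ℝ) (N : Matrix (Fin n) (Fin n) ℝ), ColStoch M ∧ ColStoch N ∧ B2 = M * A * N) ∧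
      ¬(∃ (M : Matrix (Fin m) (Fin m) ℝ) (N : Matrix (Fin n) (Fin n) ℝ), ColStoch M ∧ ColStoch N ∧ (2:ℝ)⁻¹ • (B1 + B2) = M * A * N) := by
  have h0m : 0 < m := by omega
  have h1m : 1 < m := by omega
  have h2m : 2 < m := by omega
  set i0 : Fin m := ⟨0, h0m⟩ with hi0
  set i1 : Fin m := ⟨1, h1m⟩ with hi1
  set i2 : Fin m := ⟨2, h2m⟩ with hi2
  set j0 : Fin n := ⟨0, by omega⟩ with hj0
  set j1 : Fin n := ⟨1, by omega⟩ with hj1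
  set j2 : Fin n := ⟨2, by omega⟩ with hj2
  have hi01 : i0 ≠ i1 := by simp [hi0, hi1, Fin.ext_iff]
  have hi02 : i0 ≠ i2 := by simp [hi0, hi2, Fin.ext_iff]
  have hi12 : i1 ≠ i2 := by simp [hi1, hi2, Fin.ext_iff]
  have hj10 : j1 ≠ j0 := by simp [hj0, hj1, Fin.ext_iff]
  have hj20 : j2 ≠ j0 := by simp [hj0, hj2, Fin.ext_iff]
  have hj21 : j2 ≠ j1 := by simp [hj1, hj2, Fin.ext_iff]
  set fA : Fin n → Fin m := fun j => if j = j0 then i0 else i1 with hfA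
  set σ : Fin n → Fin n := ⇑(Equiv.swap j0 j1) with hσ
  set g : Fin m → Fin m := fun k => if k = i0 then i0 else i2 with hg
  refine ⟨Sel fA, Sel (fA ∘ σ), Sel (g ∘ fA), colStoch_sel _, colStoch_sel _, colStoch_sel _,
    ⟨1, Sel σ, colStoch_one, colStoch_sel _, by rw [Matrix.one_mul, sel_mul_sel]⟩,
    ⟨Sel g, 1, colStoch_sel _, colStoch_one, by rw [Matrix.mul_one, sel_mul_sel]⟩, ?_⟩
  rintro ⟨M, N, hM, hN, hEq⟩
  -- the entries of `M * A * N` only involve the two columns `M · i0`, `M · i1`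
  have main : ∀ i j, (2:ℝ)⁻¹ * (Sel (fA ∘ σ) i j + Sel (g ∘ fA) i j)
      = M i i0 * N j0 j + M i i1 * (1 - N j0 j) := by
    intro i j
    have h := congrFun (congrFun hEq i) j
    simp only [Matrix.smul_apply, Matrix.add_apply, smul_eq_mul] at h
    rw [h, Matrix.mul_apply]
    have e1 : ∀ l : Fin n, (M * Sel fA) i l * N l j
        = M i i1 * N l j + (if l = j0 then (M i i0 - M i i1) * N l j else 0) := by
      intro l
      rw [mul_sel_apply]
      simp only [hfA]
      split_ifs with hl <;> ring
    rw [Finset.sum_congr rfl (fun l _ => e1 l), Finset.sum_add_distrib,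
      ← Finset.mul_sum, hN.2 j]
    simp only [Finset.sum_ite_eq', Finset.mem_univ, if_true]
    ring
  have hσ0 : σ j0 = j1 := Equiv.swap_apply_left j0 j1
  have hσ1 : σ j1 = j0 := Equiv.swap_apply_right j0 j1
  have hσ2 : σ j2 = j2 := Equiv.swap_apply_of_ne_of_ne hj20 hj21
  have E00 : (2:ℝ)⁻¹ * (0 + 1) = M i0 i0 * N j0 j0 + M i0 i1 * (1 - N j0 j0) := by
    have h := main i0 j0
    simpa [Sel, hσ0, hfA, hg, hi01, hi02, hi12, hi01.symm, hi02.symm, hi12.symm, hj10, hj20, hj21] using h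
  have E10 : (2:ℝ)⁻¹ * (1 + 0) = M i1 i0 * N j0 j0 + M i1 i1 * (1 - N j0 j0) := by
    have h := main i1 j0
    simpa [Sel, hσ0, hfA, hg, hi01, hi02, hi12, hi01.symm, hi02.symm, hi12.symm, hj10, hj20, hj21] using h
  have E20 : (2:ℝ)⁻¹ * (0 + 0) = M i2 i0 * N j0 j0 + M i2 i1 * (1 - N j0 j0) := by
    have h := main i2 j0
    simpa [Sel, hσ0, hfA, hg, hi01, hi02, hi12, hi01.symm, hi02.symm, hi12.symm, hj10, hj20, hj21] using h
  have E01 : (2:ℝ)⁻¹ * (1 + 0) = M i0 i0 * N j0 j1 + M i0 i1 * (1 - N j0 j1) := by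
    have h := main i0 j1
    simpa [Sel, hσ1, hfA, hg, hi01, hi02, hi12, hi01.symm, hi02.symm, hi12.symm, hj10, hj20, hj21] using h
  have E11 : (2:ℝ)⁻¹ * (0 + 0) = M i1 i0 * N j0 j1 + M i1 i1 * (1 - N j0 j1) := by
    have h := main i1 j1
    simpa [Sel, hσ1, hfA, hg, hi01, hi02, hi12, hi01.symm, hi02.symm, hi12.symm, hj10, hj20, hj21] using h
  have E21 : (2:ℝ)⁻¹ * (0 + 1) = M i2 i0 * N j0 j1 + M i2 i1 * (1 - N j0 j1) := by
    have h := main i2 j1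
    simpa [Sel, hσ1, hfA, hg, hi01, hi02, hi12, hi01.symm, hi02.symm, hi12.symm, hj10, hj20, hj21] using h
  have E02 : (2:ℝ)⁻¹ * (0 + 0) = M i0 i0 * N j0 j2 + M i0 i1 * (1 - N j0 j2) := by
    have h := main i0 j2
    simpa [Sel, hσ2, hfA, hg, hi01, hi02, hi12, hi01.symm, hi02.symm, hi12.symm, hj10, hj20, hj21] using h
  have hlle : ∀ j : Fin n, N j0 j ≤ 1 := by
    intro j
    have h1 : N j0 j ≤ ∑ l, N l j :=
      Finset.single_le_sum (fun l _ => hN.1 l j) (Finset.mem_univ j0)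
    rw [hN.2 j] at h1; exact h1
  have hl0 : ∀ j : Fin n, 0 ≤ N j0 j := fun j => hN.1 j0 j
  have hM0 : ∀ i k, 0 ≤ M i k := hM.1
  have h20 : M i2 i0 * N j0 j0 = 0 ∧ M i2 i1 * (1 - N j0 j0) = 0 := by
    constructor <;>
      nlinarith [mul_nonneg (hM0 i2 i0) (hl0 j0),
        mul_nonneg (hM0 i2 i1) (by linarith [hlle j0] : (0:ℝ) ≤ 1 - N j0 j0)]
  by_cases hu2 : M i2 i0 = 0
  · by_cases hv2 : M i2 i1 = 0
    · rw [hu2, hv2] at E21; norm_num at E21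
    · -- second case: `N j0 j0 = 1`
      have hl00 : N j0 j0 = 1 := by
        rcases mul_eq_zero.mp h20.2 with h | h
        · exact absurd h hv2
        · linarith
      have hu0 : M i0 i0 = 2⁻¹ := by rw [hl00] at E00; linarith
      have hu1 : M i1 i0 = 2⁻¹ := by rw [hl00] at E10; linarith
      have hl1 : N j0 j1 = 0 := by
        have tt : (0:ℝ) ≤ M i1 i1 * (1 - N j0 j1) :=
          mul_nonneg (hM0 i1 i1) (by linarith [hlle j1])
        rw [hu1] at E11
        linarith [hl0 j1]
      have hv0 : M i0 i1 = 2⁻¹ := by rw [hl1] at E01; linarith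
      rw [hu0, hv0] at E02
      linarith
  · -- first case: `N j0 j0 = 0`
    have hl00 : N j0 j0 = 0 := by
      rcases mul_eq_zero.mp h20.1 with h | h
      · exact absurd h hu2
      · exact h
    have hv0 : M i0 i1 = 2⁻¹ := by rw [hl00] at E00; linarith
    have hv1 : M i1 i1 = 2⁻¹ := by rw [hl00] at E10; linarith
    have hl1 : N j0 j1 = 1 := by
      have tt : (0:ℝ) ≤ M i1 i0 * N j0 j1 := mul_nonneg (hM0 i1 i0) (hl0 j1)
      rw [hv1] at E11
      linarith [hlle j1]
    have hu0 : M i0 i0 = 2⁻¹ := by rw [hl1] at E01; linarith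
    rw [hu0, hv0] at E02
    linarith

lemma cs_helper (a b c d : ℝ) (h1 : 0 ≤ a) (h2 : 0 ≤ b) (h3 : 0 ≤ c) (h4 : 0 ≤ d)
    (h5 : a + c = 1) (h6 : b + d = 1) : ColStoch !![a, b; c, d] := by
  constructor
  · intro i j; fin_cases i <;> fin_cases j <;> simpa
  · intro j; fin_cases j <;> simpa [Fin.sum_univ_two]

/- The witness triple for `m = n = 2`. -/

set_option maxHeartbeats 1000000 in
lemma caseB (m n : ℕ) (hm : m = 2) (hn : n = 2) :
    ∃ A B1 B2 : Matrix (Fin m) (Fin n) ℝ, ColStoch A ∧ ColStoch B1 ∧ ColStoch B2 ∧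
      (∃ (M : Matrix (Fin m) (Fin m) ℝ) (N : Matrix (Fin n) (Fin n) ℝ), ColStoch M ∧ ColStoch N ∧ B1 = M * A * N) ∧
      (∃ (M : Matrix (Fin m) (Fin m) ℝ) (N : Matrix (Fin n) (Fin n) ℝ), ColStoch M ∧ ColStoch N ∧ B2 = M * A * N) ∧
      ¬(∃ (M : Matrix (Fin m) (Fin m) ℝ) (N : Matrix (Fin n) (Fin n) ℝ), ColStoch M ∧ ColStoch N ∧ (2:ℝ)⁻¹ • (B1 + B2) = M * A * N) := by
  subst hm hn
  refine ⟨!![0, 1/4; 1, 3/4], !![3/4, 7/8; 1/4, 1/8], !![0, 1/4; 1, 3/4],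
    cs_helper _ _ _ _ (by norm_num) (by norm_num) (by norm_num) (by norm_num)
      (by norm_num) (by norm_num),
    cs_helper _ _ _ _ (by norm_num) (by norm_num) (by norm_num) (by norm_num)
      (by norm_num) (by norm_num),
    cs_helper _ _ _ _ (by norm_num) (by norm_num) (by norm_num) (by norm_num)
      (by norm_num) (by norm_num),
    ⟨!![0, 1; 1, 0], !![0, 1/2; 1, 1/2],
      cs_helper _ _ _ _ (by norm_num) (by norm_num) (by norm_num) (by norm_num)
        (by norm_num) (by norm_num),
      cs_helper _ _ _ _ (by norm_num) (by norm_num) (by norm_num) (by norm_num)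
        (by norm_num) (by norm_num),
      by ext i j; fin_cases i <;> fin_cases j <;>
        norm_num [Matrix.mul_apply, Fin.sum_univ_two]⟩,
    ⟨1, 1, colStoch_one, colStoch_one, by rw [Matrix.mul_one, Matrix.one_mul]⟩, ?_⟩
  rintro ⟨M, N, hM, hN, hEq⟩
  have h00 := congrFun (congrFun hEq 0) 0
  have h01 := congrFun (congrFun hEq 0) 1
  simp only [Matrix.smul_apply, Matrix.add_apply, Matrix.mul_apply, Fin.sum_univ_two,
    smul_eq_mul] at h00 h01
  norm_num at h00 h01
  have hMcol : M 0 0 + M 1 0 = 1 := by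
    have := hM.2 0; rwa [Fin.sum_univ_two] at this
  have hNcol0 : N 0 0 + N 1 0 = 1 := by
    have := hN.2 0; rwa [Fin.sum_univ_two] at this
  have hNcol1 : N 0 1 + N 1 1 = 1 := by
    have := hN.2 1; rwa [Fin.sum_univ_two] at this
  have hM00 : 0 ≤ M 0 0 := hM.1 0 0
  have hM01 : 0 ≤ M 0 1 := hM.1 0 1
  have hM10 : 0 ≤ M 1 0 := hM.1 1 0
  have hN00 : 0 ≤ N 0 0 := hN.1 0 0
  have hN01 : 0 ≤ N 0 1 := hN.1 0 1
  have hN10 : 0 ≤ N 1 0 := hN.1 1 0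
  have hN11 : 0 ≤ N 1 1 := hN.1 1 1
  rcases le_total (M 0 1) (M 0 0 / 4 + 3 * M 0 1 / 4) with hc | hc
  · nlinarith [mul_nonneg hN10 (sub_nonneg.2 hc), mul_nonneg hN01 (sub_nonneg.2 hc)]
  · nlinarith [mul_nonneg hN00 (sub_nonneg.2 hc), mul_nonneg hN11 (sub_nonneg.2 hc)]

lemma trace_avg {m n : ℕ} (U : Matrix (Fin n) (Fin m) ℝ) (Abar : Matrix (Fin m) (Fin m) ℝ)
    (B1 B2 : Matrix (Fin m) (Fin n) ℝ) (Pi : Matrix (Fin n) (Fin n) ℝ) :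
    (U * (Abar * ((2:ℝ)⁻¹ • (B1 + B2))) * Pi).trace
      = 2⁻¹ * (U * (Abar * B1) * Pi).trace + 2⁻¹ * (U * (Abar * B2) * Pi).trace := by
  rw [Matrix.mul_smul, Matrix.mul_smul, Matrix.smul_mul, Matrix.trace_smul,
    Matrix.mul_add, Matrix.mul_add, Matrix.add_mul, Matrix.trace_add, smul_eq_mul]
  ring

/-- Theorem 2: for `n = 2^(m-2) + 1`, `m ≥ 2`, no subset of utility matrices makes
reduced Blackwell-usefulness equivalent to the Shannon-order. -/
theorem no_utility_set_general (m : ℕ) (hm : 2 ≤ m) :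
    let n : ℕ := 2 ^ (m - 2) + 1
    let Pi : Matrix (Fin n) (Fin n) ℝ := (n : ℝ)⁻¹ • (1 : Matrix (Fin n) (Fin n) ℝ)
    ¬ ∃ 𝒰 : Set (Matrix (Fin n) (Fin m) ℝ),
      ∀ C Cbar : Matrix (Fin m) (Fin n) ℝ, ColStoch C → ColStoch Cbar →
        ((∃ (M : Matrix (Fin m) (Fin m) ℝ) (N : Matrix (Fin n) (Fin n) ℝ),
            ColStoch M ∧ ColStoch N ∧ Cbar = M * C * N)
          ↔
         (∀ U ∈ 𝒰, ∀ Abar : Matrix (Fin m) (Fin m) ℝ, ColStoch Abar →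
            ∃ A : Matrix (Fin m) (Fin m) ℝ, ColStoch A ∧
              (U * (A * C) * Pi).trace ≥ (U * (Abar * Cbar) * Pi).trace)) := by
  intro n Pi
  rintro ⟨𝒰, h𝒰⟩
  have hn_def : n = 2 ^ (m - 2) + 1 := rfl
  obtain ⟨A, B1, B2, hA, hB1, hB2, hg1, hg2, hng⟩ :
      ∃ A B1 B2 : Matrix (Fin m) (Fin n) ℝ, ColStoch A ∧ ColStoch B1 ∧ ColStoch B2 ∧
        (∃ (M : Matrix (Fin m) (Fin m) ℝ) (N : Matrix (Fin n) (Fin n) ℝ), ColStoch M ∧ ColStoch N ∧ B1 = M * A * N) ∧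
        (∃ (M : Matrix (Fin m) (Fin m) ℝ) (N : Matrix (Fin n) (Fin n) ℝ), ColStoch M ∧ ColStoch N ∧ B2 = M * A * N) ∧
        ¬(∃ (M : Matrix (Fin m) (Fin m) ℝ) (N : Matrix (Fin n) (Fin n) ℝ), ColStoch M ∧ ColStoch N ∧ (2:ℝ)⁻¹ • (B1 + B2) = M * A * N) := by
    rcases eq_or_lt_of_le hm with h2 | h3
    · refine caseB m n h2.symm ?_
      rw [hn_def, ← h2]
      norm_num
    · refine caseA m n h3 ?_
      have h1 : (2:ℕ) ^ 1 ≤ 2 ^ (m - 2) := Nat.pow_le_pow_right (by norm_num) (by omega)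
      omega
  set B : Matrix (Fin m) (Fin n) ℝ := (2:ℝ)⁻¹ • (B1 + B2) with hBdef
  have hB : ColStoch B := colStoch_avg hB1 hB2
  have r1 := (h𝒰 A B1 hA hB1).mp hg1
  have r2 := (h𝒰 A B2 hA hB2).mp hg2
  apply hng
  apply (h𝒰 A B hA hB).mpr
  intro U hU Abar hAbar
  obtain ⟨A1, hA1, hx1⟩ := r1 U hU Abar hAbar
  obtain ⟨A2, hA2, hx2⟩ := r2 U hU Abar hAbar
  have key : (U * (Abar * B) * Pi).trace
      = 2⁻¹ * (U * (Abar * B1) * Pi).trace + 2⁻¹ * (U * (Abar * B2) * Pi).trace :=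
    trace_avg U Abar B1 B2 Pi
  rcases le_total ((U * (A1 * A) * Pi).trace) ((U * (A2 * A) * Pi).trace) with hc | hc
  · refine ⟨A2, hA2, ?_⟩
    rw [ge_iff_le, key]
    have := ge_iff_le.mp hx1
    have := ge_iff_le.mp hx2
    linarith
  · refine ⟨A1, hA1, ?_⟩
    rw [ge_iff_le, key]
    have := ge_iff_le.mp hx1
    have := ge_iff_le.mp hx2
    linarith
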